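/- Let k be a positive integer, let t be an integer with 0 ≤ t ≤ 2k, and let l, m be non-negative integers. Then (-1)^{Σ_{i=0}^{t} C(t,i)C(l+m,2k−i)} − (-1)^{Σ_{i=0}^{t} C(t,i)C(l,2k−i)} = (-1)^{Σ_{i=0}^{t} C(t,i)C(l+m,2k+1−i)} + (-1)^{Σ_{i=0}^{t} C(t,i)C(l+m+1,2k+1−i)} − (-1)^{Σ_{i=0}^{t} C(t,i)C(l,2k+1−i)} − (-1)^{Σ_{i=0}^{t} C(t,i)C(l+1,2k+1−i)}. -/

import Mathlib

open Finset

/-- Truncated Vandermonde: if `t ≤ r` then `Σ_{i=0}^{t} C(t,i)C(n,r-i) = C(t+n,r)`. -/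
lemma vandermonde_trunc (t n r : ℕ) (h : t ≤ r) :
    ∑ i ∈ Finset.range (t + 1), Nat.choose t i * Nat.choose n (r - i)
      = Nat.choose (t + n) r := by
  rw [Nat.add_choose_eq, Finset.Nat.sum_antidiagonal_eq_sum_range_succ
    (fun i j => Nat.choose t i * Nat.choose n j)]
  rw [← Finset.sum_subset (Finset.range_subset_range.2 (Nat.succ_le_succ h))]
  intro i hi hni
  simp only [Finset.mem_range, Nat.lt_succ_iff, not_le] at hni
  rw [Nat.choose_eq_zero_of_lt hni, zero_mul]

lemma parity_lemma (n k : ℕ) (h : Nat.choose n (2 * k + 1) % 2 = 1) :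
    Nat.choose n (2 * k) % 2 = 1 := by
  haveI : Fact (Nat.Prime 2) := ⟨Nat.prime_two⟩
  have h1 := @Choose.choose_modEq_choose_mod_mul_choose_div_nat n (2 * k + 1) 2 _
  have h2 := @Choose.choose_modEq_choose_mod_mul_choose_div_nat n (2 * k) 2 _
  have e1 : (2 * k + 1) % 2 = 1 := by omega
  have e2 : (2 * k + 1) / 2 = k := by omega
  have e3 : (2 * k) % 2 = 0 := by omega
  have e4 : (2 * k) / 2 = k := by omega
  rw [e1, e2] at h1
  rw [e3, e4, Nat.choose_zero_right, one_mul] at h2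
  unfold Nat.ModEq at h1 h2
  rw [h2]
  rw [h1, Nat.mul_mod] at h
  rcases Nat.mod_two_eq_zero_or_one (Nat.choose (n / 2) k) with hc | hc
  · rw [hc] at h; simp at h
  · exact hc

/-- Pointwise sign identity. -/
lemma sign_step (n k : ℕ) :
    (-1 : ℤ) ^ (Nat.choose n (2 * k)) =
      (-1 : ℤ) ^ (Nat.choose n (2 * k + 1)) + (-1 : ℤ) ^ (Nat.choose (n + 1) (2 * k + 1)) - 1 := by
  have hp : Nat.choose (n + 1) (2 * k + 1) = Nat.choose n (2 * k) + Nat.choose n (2 * k + 1) :=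
    Nat.choose_succ_succ n (2 * k)
  rw [hp, pow_add]
  rcases Nat.mod_two_eq_zero_or_one (Nat.choose n (2 * k + 1)) with hx | hx
  · rw [Even.neg_one_pow (Nat.even_iff.2 hx)]; ring
  · have hy := parity_lemma n k hx
    rw [Odd.neg_one_pow (Nat.odd_iff.2 hx), Odd.neg_one_pow (Nat.odd_iff.2 hy)]
    ring

theorem sign_binomial_identity_general (k t l m : ℕ) (hk : 1 ≤ k) (ht : t ≤ 2 * k) :
    (-1 : ℤ) ^ (∑ i ∈ Finset.range (t + 1), Nat.choose t i * Nat.choose (l + m) (2 * k - i)) -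
        (-1 : ℤ) ^ (∑ i ∈ Finset.range (t + 1), Nat.choose t i * Nat.choose l (2 * k - i)) =
      (-1 : ℤ) ^ (∑ i ∈ Finset.range (t + 1),
          Nat.choose t i * Nat.choose (l + m) (2 * k + 1 - i)) +
        (-1 : ℤ) ^ (∑ i ∈ Finset.range (t + 1),
          Nat.choose t i * Nat.choose (l + m + 1) (2 * k + 1 - i)) -
        (-1 : ℤ) ^ (∑ i ∈ Finset.range (t + 1),
          Nat.choose t i * Nat.choose l (2 * k + 1 - i)) -
        (-1 : ℤ) ^ (∑ i ∈ Finset.range (t + 1),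
          Nat.choose t i * Nat.choose (l + 1) (2 * k + 1 - i)) := by
  rw [vandermonde_trunc t (l + m) (2 * k) ht, vandermonde_trunc t l (2 * k) ht,
    vandermonde_trunc t (l + m) (2 * k + 1) (le_trans ht (Nat.le_succ _)),
    vandermonde_trunc t (l + m + 1) (2 * k + 1) (le_trans ht (Nat.le_succ _)),
    vandermonde_trunc t l (2 * k + 1) (le_trans ht (Nat.le_succ _)),
    vandermonde_trunc t (l + 1) (2 * k + 1) (le_trans ht (Nat.le_succ _))]
  have ha : t + (l + m + 1) = (t + (l + m)) + 1 := by ring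
  have hb : t + (l + 1) = (t + l) + 1 := by ring
  rw [ha, hb, sign_step (t + (l + m)) k, sign_step (t + l) k]
  ring
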